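/- Let F be a continuous, strictly increasing CDF with density f > 0 such that F/f is non-decreasing, and define Ω(ĉ) = Σ_l w^l μ^l q^l (1 - q^l F(ĉ))^{n-1} - F(ĉ)/f(ĉ) with w^l ≥ 0, μ^l ∈ (0,1], q^l ∈ (0,1], n ≥ 1. Then Ω is non-increasing, and ĉ ↦ Ω(ĉ) - ĉ is strictly decreasing; hence Ω has at most one fixed point, and if Ω(c_low) > c_low and Ω(c_high) < c_high, exactly one fixed point c̃ ∈ (c_low, c_high) exists. -/
import Mathlib


/-- The first-order-condition function Ω of the private program is non-increasing,
Ω - id is strictly decreasing, so Ω has at most one fixed point, and under the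
boundary conditions exactly one fixed point c̃ exists in the interior. -/
theorem stmt_12 (clow chigh : ℝ) (hlt : clow < chigh)
    (F f : ℝ → ℝ)
    (hFcont : ContinuousOn F (Set.Icc clow chigh))
    (hFmono : StrictMonoOn F (Set.Icc clow chigh))
    (hFrange : ∀ c ∈ Set.Icc clow chigh, F c ∈ Set.Icc (0 : ℝ) 1)
    (hf : ∀ c ∈ Set.Icc clow chigh, 0 < f c)
    (hfcont : ContinuousOn f (Set.Icc clow chigh))
    (hderiv : ∀ c ∈ Set.Icc clow chigh, HasDerivAt F (f c) c)
    (hFf : MonotoneOn (fun c => F c / f c) (Set.Icc clow chigh))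
    (n : ℕ) (hn : 1 ≤ n)
    (L : ℕ) (w μ q : Fin L → ℝ)
    (hw : ∀ l, 0 ≤ w l)
    (hμ : ∀ l, μ l ∈ Set.Ioc (0 : ℝ) 1)
    (hq : ∀ l, q l ∈ Set.Ioc (0 : ℝ) 1)
    (Ω : ℝ → ℝ)
    (hΩ : ∀ c, Ω c = ∑ l, w l * μ l * q l * (1 - q l * F c) ^ (n - 1) - F c / f c) :
    AntitoneOn Ω (Set.Icc clow chigh) ∧
    StrictAntiOn (fun c => Ω c - c) (Set.Icc clow chigh) ∧
    (∀ c₁ ∈ Set.Icc clow chigh, ∀ c₂ ∈ Set.Icc clow chigh,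
      Ω c₁ = c₁ → Ω c₂ = c₂ → c₁ = c₂) ∧
    (clow < Ω clow → Ω chigh < chigh →
      ∃! c, c ∈ Set.Ioo clow chigh ∧ Ω c = c) := by
  have hAnti : AntitoneOn Ω (Set.Icc clow chigh) := by
    intro a ha b hb hab
    rw [hΩ a, hΩ b]
    have hF : F a ≤ F b := (hFmono.monotoneOn) ha hb hab
    have hsum : ∑ l, w l * μ l * q l * (1 - q l * F b) ^ (n - 1)
        ≤ ∑ l, w l * μ l * q l * (1 - q l * F a) ^ (n - 1) := by
      apply Finset.sum_le_sum
      intro l _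
      have hq0 := (hq l).1
      have hq1 := (hq l).2
      have hμ0 := (hμ l).1
      have hμ1 := (hμ l).2
      have hFb1 : F b ≤ 1 := (hFrange b hb).2
      have hFb0 : 0 ≤ F b := (hFrange b hb).1
      have hb0 : (0:ℝ) ≤ 1 - q l * F b := by nlinarith
      have hpow : (1 - q l * F b) ^ (n - 1) ≤ (1 - q l * F a) ^ (n - 1) := by
        apply pow_le_pow_left₀ hb0
        nlinarith
      have hcoef : 0 ≤ w l * μ l * q l := mul_nonneg (mul_nonneg (hw l) hμ0.le) hq0.le
      exact mul_le_mul_of_nonneg_left hpow hcoef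
    have hratio : F a / f a ≤ F b / f b := hFf ha hb hab
    linarith
  have hStrict : StrictAntiOn (fun c => Ω c - c) (Set.Icc clow chigh) := by
    intro a ha b hb hab
    have := hAnti ha hb hab.le
    simp only
    linarith
  have hUniq : ∀ c₁ ∈ Set.Icc clow chigh, ∀ c₂ ∈ Set.Icc clow chigh,
      Ω c₁ = c₁ → Ω c₂ = c₂ → c₁ = c₂ := by
    intro c₁ h₁ c₂ h₂ e₁ e₂
    by_contra hne
    rcases lt_or_gt_of_ne hne with h | h
    · have := hStrict h₁ h₂ h
      simp only at this; linarith
    · have := hStrict h₂ h₁ h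
      simp only at this; linarith
  refine ⟨hAnti, hStrict, hUniq, ?_⟩
  intro h1 h2
  have hΩfun : Ω = fun c => ∑ l, w l * μ l * q l * (1 - q l * F c) ^ (n - 1) - F c / f c :=
    funext hΩ
  have hΩcont : ContinuousOn Ω (Set.Icc clow chigh) := by
    rw [hΩfun]
    apply ContinuousOn.sub
    · apply continuousOn_finset_sum
      intro l _
      exact (continuousOn_const.mul ((continuousOn_const.sub (continuousOn_const.mul hFcont)).pow _))
    · exact hFcont.div hfcont (fun c hc => (hf c hc).ne')
  have hcont : ContinuousOn (fun c => Ω c - c) (Set.Icc clow chigh) :=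
    hΩcont.sub continuousOn_id
  have hmem : (0:ℝ) ∈ Set.Ioo (Ω chigh - chigh) (Ω clow - clow) := ⟨by linarith, by linarith⟩
  have := intermediate_value_Ioo' hlt.le hcont hmem
  obtain ⟨c, hc, hc0⟩ := this
  refine ⟨c, ⟨hc, by simpa using sub_eq_zero.mp hc0⟩, ?_⟩
  rintro c' ⟨hc', he'⟩
  exact hUniq c' (Set.Ioo_subset_Icc_self hc') c (Set.Ioo_subset_Icc_self hc) he'
    (by simpa using sub_eq_zero.mp hc0)
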